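/- The moduli space H (of representations ρ: F_{2g} → GL(2,ℂ) with ∏[A_j,B_j] = −I, modulo conjugation) is diffeomorphic to the product of a torus factor and M quotiented by Σ = (ℤ/2)^{2g}: scalar multiplication induces a map T × M → H which is a free quotient by Σ, where T = (ℂ*)^{2g} and M is the corresponding SL(2,ℂ)-representation space. -/

import Mathlib

open scoped commutatorElement in
/-- The product of commutators `∏_j [A_j, B_j]` of a `2g`-tuple of elements of a group. -/
def commProd {Γ : Type*} [Group Γ] (g : ℕ) (A B : Fin g → Γ) : Γ :=
  ((List.finRange g).map fun j => ⁅A j, B j⁆).prod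

/-- The space `μ⁻¹(−I) ⊂ GL(2,ℂ)^{2g}` of `2g`-tuples of matrices whose product of
commutators is `−I`. -/
def GLRep (g : ℕ) : Type :=
  {ρ : (Fin g → GL (Fin 2) ℂ) × (Fin g → GL (Fin 2) ℂ) // commProd g ρ.1 ρ.2 = -1}

/-- The analogous space for `SL(2,ℂ)`. -/
def SLRep (g : ℕ) : Type :=
  {ρ : (Fin g → Matrix.SpecialLinearGroup (Fin 2) ℂ) ×
        (Fin g → Matrix.SpecialLinearGroup (Fin 2) ℂ) //
    ((commProd g ρ.1 ρ.2 : Matrix.SpecialLinearGroup (Fin 2) ℂ) :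
        Matrix (Fin 2) (Fin 2) ℂ) = -1}

/-- Simultaneous conjugacy of tuples in a group. -/
def conjRel {Γ : Type*} [Group Γ] (g : ℕ)
    (s t : (Fin g → Γ) × (Fin g → Γ)) : Prop :=
  ∃ h : Γ, (∀ j, t.1 j = h * s.1 j * h⁻¹) ∧ (∀ j, t.2 j = h * s.2 j * h⁻¹)

/-- The scalars `ℂ* → GL(2,ℂ)`. -/
noncomputable def unitScalar : ℂˣ →* GL (Fin 2) ℂ :=
  Units.map (algebraMap ℂ (Matrix (Fin 2) (Fin 2) ℂ)).toMonoidHom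

/-- Multiply an `SL(2,ℂ)`-tuple by a `(ℂ*)^{2g}`-tuple of scalars, giving a `GL(2,ℂ)`-tuple. -/
noncomputable def scalarCombo {g : ℕ} (t : (Fin g → ℂˣ) × (Fin g → ℂˣ)) (ρ : SLRep g) :
    (Fin g → GL (Fin 2) ℂ) × (Fin g → GL (Fin 2) ℂ) :=
  (fun j => unitScalar (t.1 j) * Matrix.SpecialLinearGroup.toGL (ρ.1.1 j),
   fun j => unitScalar (t.2 j) * Matrix.SpecialLinearGroup.toGL (ρ.1.2 j))

section helpers
variable {Γ : Type*} [Group Γ] {g : ℕ}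

lemma conjRel_equiv (g : ℕ) : Equivalence (conjRel (Γ := Γ) g) := by
  constructor
  · exact fun a => ⟨1, fun j => by simp, fun j => by simp⟩
  · rintro a b ⟨h, h1, h2⟩
    exact ⟨h⁻¹, fun j => by rw [h1 j]; group, fun j => by rw [h2 j]; group⟩
  · rintro a b c ⟨h, h1, h2⟩ ⟨k, k1, k2⟩
    refine ⟨k * h, fun j => ?_, fun j => ?_⟩
    · rw [k1 j, h1 j]; group
    · rw [k2 j, h2 j]; group

lemma quot_conj_eq {a b : (Fin g → Γ) × (Fin g → Γ)} :
    Quot.mk (conjRel g) a = Quot.mk (conjRel g) b ↔ conjRel g a b :=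
  Quot.eq.trans (conjRel_equiv g).eqvGen_iff

open scoped commutatorElement in
lemma commutator_central {z w a b : Γ}
    (hz : ∀ x, Commute z x) (hw : ∀ x, Commute w x) :
    ⁅z * a, w * b⁆ = ⁅a, b⁆ := by
  have h1 : (z * a) * (w * b) = (z * w) * (a * b) := by
    rw [mul_assoc z a, ← mul_assoc a w, (hw a).symm.eq, mul_assoc w a, ← mul_assoc]
  have h2 : (z * a)⁻¹ * (w * b)⁻¹ = (a⁻¹ * b⁻¹) * (z * w)⁻¹ := by
    rw [← mul_inv_rev]
    have : (w * b) * (z * a) = (z * w) * (b * a) := by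
      rw [mul_assoc w b, ← mul_assoc b z, (hz b).symm.eq, mul_assoc z b, ← mul_assoc,
        (hz w).symm.eq]
    rw [this, mul_inv_rev, mul_inv_rev]
  have hc : Commute (z * w) (a * b * (a⁻¹ * b⁻¹)) := ((hz _).mul_left (hw _))
  calc ⁅z * a, w * b⁆ = ((z * a) * (w * b)) * ((z * a)⁻¹ * (w * b)⁻¹) := by
        rw [commutatorElement_def]; group
    _ = (z * w) * (a * b * (a⁻¹ * b⁻¹)) * (z * w)⁻¹ := by rw [h1, h2]; group
    _ = a * b * (a⁻¹ * b⁻¹) := by rw [hc.eq, mul_assoc, mul_inv_cancel, mul_one]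
    _ = ⁅a, b⁆ := by rw [commutatorElement_def]; group

lemma commProd_central (z w A B : Fin g → Γ)
    (hz : ∀ j x, Commute (z j) x) (hw : ∀ j x, Commute (w j) x) :
    commProd g (fun j => z j * A j) (fun j => w j * B j) = commProd g A B := by
  unfold commProd
  congr 1
  exact List.map_congr_left fun j _ => commutator_central (hz j) (hw j)

lemma commProd_map {Δ : Type*} [Group Δ] (f : Γ →* Δ) (A B : Fin g → Γ) :
    f (commProd g A B) = commProd g (f ∘ A) (f ∘ B) := by
  unfold commProd
  rw [map_list_prod, List.map_map]
  congr 1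
  exact List.map_congr_left fun j _ => map_commutatorElement f _ _

end helpers

lemma unitScalar_commute (u : ℂˣ) (x : GL (Fin 2) ℂ) : Commute (unitScalar u) x :=
  Units.ext (Algebra.commutes (u : ℂ) (x : Matrix (Fin 2) (Fin 2) ℂ))

lemma det_unitScalar (u : ℂˣ) : Matrix.GeneralLinearGroup.det (unitScalar u) = u ^ 2 := by
  apply Units.ext
  show ((unitScalar u : GL (Fin 2) ℂ) : Matrix (Fin 2) (Fin 2) ℂ).det = (u : ℂ) ^ 2
  have : ((unitScalar u : GL (Fin 2) ℂ) : Matrix (Fin 2) (Fin 2) ℂ)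
      = (u : ℂ) • (1 : Matrix (Fin 2) (Fin 2) ℂ) := by
    simp [unitScalar, Algebra.algebraMap_eq_smul_one]
  rw [this, Matrix.det_smul]
  simp

lemma toGL_injective :
    Function.Injective (Matrix.SpecialLinearGroup.toGL (n := Fin 2) (R := ℂ)) :=
  fun a b h => Subtype.ext (congrArg Units.val h)

lemma exists_sqrt_unit (u : ℂˣ) : ∃ v : ℂˣ, v ^ 2 = u := by
  obtain ⟨z, hz⟩ := IsAlgClosed.exists_pow_nat_eq (u : ℂ) (n := 2) (by norm_num)
  have hz0 : z ≠ 0 := by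
    rintro rfl
    exact u.ne_zero (by simpa using hz.symm)
  exact ⟨Units.mk0 z hz0, Units.ext (by simpa using hz)⟩

/-- Scale a `GL` element by a scalar so as to land in `SL`. -/
noncomputable def slScale (c : ℂˣ) (x : GL (Fin 2) ℂ)
    (h : (c : ℂ) ^ 2 * ((x : Matrix (Fin 2) (Fin 2) ℂ)).det = 1) :
    Matrix.SpecialLinearGroup (Fin 2) ℂ :=
  ⟨(c : ℂ) • (x : Matrix (Fin 2) (Fin 2) ℂ), by
    rw [Matrix.det_smul]; simpa using h⟩

lemma toGL_slScale (c : ℂˣ) (x : GL (Fin 2) ℂ)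
    (h : (c : ℂ) ^ 2 * ((x : Matrix (Fin 2) (Fin 2) ℂ)).det = 1) :
    Matrix.SpecialLinearGroup.toGL (slScale c x h) = unitScalar c * x := by
  apply Units.ext
  show (c : ℂ) • (x : Matrix (Fin 2) (Fin 2) ℂ)
      = (algebraMap ℂ (Matrix (Fin 2) (Fin 2) ℂ) (c : ℂ)) * x
  rw [Algebra.algebraMap_eq_smul_one, Matrix.smul_mul, one_mul]

lemma slScale_one_commute (c : ℂˣ)
    (h : (c : ℂ) ^ 2 * ((1 : GL (Fin 2) ℂ) : Matrix (Fin 2) (Fin 2) ℂ).det = 1)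
    (m : Matrix.SpecialLinearGroup (Fin 2) ℂ) : Commute (slScale c 1 h) m := by
  apply toGL_injective
  show Matrix.SpecialLinearGroup.toGL _ = Matrix.SpecialLinearGroup.toGL _
  rw [map_mul, map_mul, toGL_slScale]
  rw [mul_one]
  exact (unitScalar_commute c _).eq

lemma conj_scalar_left (c : ℂˣ) (h x : GL (Fin 2) ℂ) :
    h * (unitScalar c * x) * h⁻¹ = unitScalar c * (h * x * h⁻¹) := by
  calc h * (unitScalar c * x) * h⁻¹ = h * unitScalar c * x * h⁻¹ := by group
    _ = unitScalar c * h * x * h⁻¹ := by rw [← (unitScalar_commute c h).eq]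
    _ = unitScalar c * (h * x * h⁻¹) := by group

lemma conj_by_scalar_mul (c : ℂˣ) (h x : GL (Fin 2) ℂ) :
    (unitScalar c * h) * x * (unitScalar c * h)⁻¹ = h * x * h⁻¹ := by
  calc (unitScalar c * h) * x * (unitScalar c * h)⁻¹
      = unitScalar c * (h * x * h⁻¹) * (unitScalar c)⁻¹ := by group
    _ = (h * x * h⁻¹) * unitScalar c * (unitScalar c)⁻¹ := by
        rw [(unitScalar_commute c _).eq]
    _ = h * x * h⁻¹ := by group

lemma sq_one_scale_cond (ε : ℂˣ) (hε : ε ^ 2 = 1) :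
    ((ε⁻¹ : ℂˣ) : ℂ) ^ 2 * ((1 : GL (Fin 2) ℂ) : Matrix (Fin 2) (Fin 2) ℂ).det = 1 := by
  have h : (ε : ℂ) ^ 2 = 1 := by
    rw [← Units.val_pow_eq_pow_val, hε, Units.val_one]
  have : ((1 : GL (Fin 2) ℂ) : Matrix (Fin 2) (Fin 2) ℂ) = 1 := rfl
  rw [this, Matrix.det_one, mul_one, Units.val_inv_eq_inv_val, inv_pow, h, inv_one]

lemma sqrt_scale_cond (x : GL (Fin 2) ℂ) (v : ℂˣ)
    (hv : v ^ 2 = Matrix.GeneralLinearGroup.det x) :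
    ((v⁻¹ : ℂˣ) : ℂ) ^ 2 * ((x : Matrix (Fin 2) (Fin 2) ℂ)).det = 1 := by
  have h : (v : ℂ) ^ 2 = ((x : Matrix (Fin 2) (Fin 2) ℂ)).det := congrArg Units.val hv
  rw [Units.val_inv_eq_inv_val, inv_pow, h, inv_mul_cancel₀]
  rw [← h]
  exact pow_ne_zero 2 v.ne_zero

/-- Let `H = μ⁻¹(−I)/GL(2,ℂ)` be the moduli of representations with
`∏ [A_j,B_j] = −I` modulo conjugation, `M` the corresponding `SL(2,ℂ)`-space modulo
conjugation, and `T = (ℂ*)^{2g}`.  Scalar multiplication induces a map `T × M → H` which is a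
free quotient by `Σ = (ℤ/2)^{2g}`: it is surjective, two pairs `(t, [ρ])`, `(t', [ρ'])` have
the same image in `H` iff they differ by the action `ε • (t, [ρ]) = (εt, [ε⁻¹ρ])` of some
`ε ∈ Σ = {±1}^{2g} ⊂ T`, and `Σ` acts freely. -/
theorem glRep_is_free_sigma_quotient_of_torus_times_slRep (g : ℕ) (hg : 2 ≤ g) :
    -- surjectivity of `T × M → H`
    (∀ s : GLRep g, ∃ (t : (Fin g → ℂˣ) × (Fin g → ℂˣ)) (ρ : SLRep g)
        (hc : commProd g (scalarCombo t ρ).1 (scalarCombo t ρ).2 = -1),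
        Quot.mk (conjRel g) (⟨scalarCombo t ρ, hc⟩ : GLRep g).1 = Quot.mk (conjRel g) s.1) ∧
    -- the fibres of `T × M → H` are exactly the orbits of `Σ = {±1}^{2g}`
    (∀ (t t' : (Fin g → ℂˣ) × (Fin g → ℂˣ)) (ρ ρ' : SLRep g),
      (Quot.mk (conjRel g) (scalarCombo t ρ) = Quot.mk (conjRel g) (scalarCombo t' ρ')) ↔
        ∃ ε : (Fin g → ℂˣ) × (Fin g → ℂˣ),
          (∀ j, ε.1 j ^ 2 = 1) ∧ (∀ j, ε.2 j ^ 2 = 1) ∧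
          (t'.1 = ε.1 * t.1) ∧ (t'.2 = ε.2 * t.2) ∧
          ∃ ρ'' : SLRep g,
            (∀ j, Matrix.SpecialLinearGroup.toGL (ρ''.1.1 j)
              = (unitScalar (ε.1 j))⁻¹ * Matrix.SpecialLinearGroup.toGL (ρ.1.1 j)) ∧
            (∀ j, Matrix.SpecialLinearGroup.toGL (ρ''.1.2 j)
              = (unitScalar (ε.2 j))⁻¹ * Matrix.SpecialLinearGroup.toGL (ρ.1.2 j)) ∧
            Quot.mk (conjRel g) ρ''.1 = Quot.mk (conjRel g) ρ'.1) ∧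
    -- `Σ` acts freely on `T × M`
    (∀ (t : (Fin g → ℂˣ) × (Fin g → ℂˣ)) (ε : (Fin g → ℂˣ) × (Fin g → ℂˣ)),
      (∀ j, ε.1 j ^ 2 = 1) → (∀ j, ε.2 j ^ 2 = 1) →
      ε.1 * t.1 = t.1 → ε.2 * t.2 = t.2 → ε = 1) := by
  refine ⟨?_, ?_, ?_⟩
  · -- surjectivity
    intro s
    choose v hv using fun j => exists_sqrt_unit (Matrix.GeneralLinearGroup.det (s.1.1 j))
    choose w hw using fun j => exists_sqrt_unit (Matrix.GeneralLinearGroup.det (s.1.2 j))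
    set ρA : Fin g → Matrix.SpecialLinearGroup (Fin 2) ℂ :=
      fun j => slScale (v j)⁻¹ (s.1.1 j) (sqrt_scale_cond _ _ (hv j)) with hρA
    set ρB : Fin g → Matrix.SpecialLinearGroup (Fin 2) ℂ :=
      fun j => slScale (w j)⁻¹ (s.1.2 j) (sqrt_scale_cond _ _ (hw j)) with hρB
    have hA : ∀ j, unitScalar (v j) * Matrix.SpecialLinearGroup.toGL (ρA j) = s.1.1 j := by
      intro j
      rw [hρA, toGL_slScale, ← mul_assoc, ← map_mul, mul_inv_cancel, map_one, one_mul]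
    have hB : ∀ j, unitScalar (w j) * Matrix.SpecialLinearGroup.toGL (ρB j) = s.1.2 j := by
      intro j
      rw [hρB, toGL_slScale, ← mul_assoc, ← map_mul, mul_inv_cancel, map_one, one_mul]
    have hGL : commProd g (fun j => Matrix.SpecialLinearGroup.toGL (ρA j))
        (fun j => Matrix.SpecialLinearGroup.toGL (ρB j)) = -1 := by
      have h1 : commProd g (fun j => unitScalar (v j) * Matrix.SpecialLinearGroup.toGL (ρA j))
          (fun j => unitScalar (w j) * Matrix.SpecialLinearGroup.toGL (ρB j))
          = commProd g (fun j => Matrix.SpecialLinearGroup.toGL (ρA j))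
            (fun j => Matrix.SpecialLinearGroup.toGL (ρB j)) :=
        commProd_central _ _ _ _ (fun j x => unitScalar_commute (v j) x)
          (fun j x => unitScalar_commute (w j) x)
      rw [← h1]
      have h2 : (fun j => unitScalar (v j) * Matrix.SpecialLinearGroup.toGL (ρA j)) = s.1.1 :=
        funext hA
      have h3 : (fun j => unitScalar (w j) * Matrix.SpecialLinearGroup.toGL (ρB j)) = s.1.2 :=
        funext hB
      rw [h2, h3]
      exact s.2
    have hSL : ((commProd g ρA ρB : Matrix.SpecialLinearGroup (Fin 2) ℂ) :
        Matrix (Fin 2) (Fin 2) ℂ) = -1 := by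
      have := commProd_map (Matrix.SpecialLinearGroup.toGL (n := Fin 2) (R := ℂ)) ρA ρB
      have h4 : Matrix.SpecialLinearGroup.toGL (commProd g ρA ρB) = -1 := by
        rw [this]
        exact hGL
      have h5 := congrArg Units.val h4
      simpa using h5
    refine ⟨(v, w), ⟨(ρA, ρB), hSL⟩, ?_, ?_⟩
    · show commProd g (fun j => unitScalar (v j) * Matrix.SpecialLinearGroup.toGL (ρA j))
          (fun j => unitScalar (w j) * Matrix.SpecialLinearGroup.toGL (ρB j)) = -1
      rw [funext hA, funext hB]
      exact s.2
    · apply congrArg (Quot.mk (conjRel g))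
      exact Prod.ext (funext hA) (funext hB)
  · -- fibres
    intro t t' ρ ρ'
    constructor
    · intro hq
      obtain ⟨h, h1, h2⟩ := quot_conj_eq.mp hq
      -- determinants give squares equal
      have hsq : ∀ (u u' : ℂˣ) (m m' : Matrix.SpecialLinearGroup (Fin 2) ℂ),
          unitScalar u' * Matrix.SpecialLinearGroup.toGL m'
            = h * (unitScalar u * Matrix.SpecialLinearGroup.toGL m) * h⁻¹ → u' ^ 2 = u ^ 2 := by
        intro u u' m m' he
        have hd := congrArg Matrix.GeneralLinearGroup.det he
        simp only [map_mul, map_inv, det_unitScalar,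
          Matrix.SpecialLinearGroup.coeToGL_det, mul_one] at hd
        rw [hd, mul_comm, ← mul_assoc, inv_mul_cancel, one_mul]
      have hsq1 : ∀ j, t'.1 j ^ 2 = t.1 j ^ 2 := fun j => hsq _ _ _ _ (h1 j)
      have hsq2 : ∀ j, t'.2 j ^ 2 = t.2 j ^ 2 := fun j => hsq _ _ _ _ (h2 j)
      set ε1 : Fin g → ℂˣ := fun j => t'.1 j * (t.1 j)⁻¹ with hε1def
      set ε2 : Fin g → ℂˣ := fun j => t'.2 j * (t.2 j)⁻¹ with hε2def
      have hε1 : ∀ j, ε1 j ^ 2 = 1 := by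
        intro j; rw [hε1def]; simp only []
        rw [mul_pow, hsq1 j, inv_pow, mul_inv_cancel]
      have hε2 : ∀ j, ε2 j ^ 2 = 1 := by
        intro j; rw [hε2def]; simp only []
        rw [mul_pow, hsq2 j, inv_pow, mul_inv_cancel]
      -- ρ'' as ε⁻¹ • ρ
      set c1 : Fin g → Matrix.SpecialLinearGroup (Fin 2) ℂ :=
        fun j => slScale (ε1 j)⁻¹ 1 (sq_one_scale_cond _ (hε1 j)) with hc1
      set c2 : Fin g → Matrix.SpecialLinearGroup (Fin 2) ℂ :=
        fun j => slScale (ε2 j)⁻¹ 1 (sq_one_scale_cond _ (hε2 j)) with hc2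
      have hprop : ((commProd g (fun j => c1 j * ρ.1.1 j) (fun j => c2 j * ρ.1.2 j) :
          Matrix.SpecialLinearGroup (Fin 2) ℂ) : Matrix (Fin 2) (Fin 2) ℂ) = -1 := by
        rw [commProd_central _ _ _ _ (fun j x => slScale_one_commute _ _ x)
          (fun j x => slScale_one_commute _ _ x)]
        exact ρ.2
      set ρ'' : SLRep g := ⟨(fun j => c1 j * ρ.1.1 j, fun j => c2 j * ρ.1.2 j), hprop⟩
      have hρ''1 : ∀ j, Matrix.SpecialLinearGroup.toGL (ρ''.1.1 j)
          = (unitScalar (ε1 j))⁻¹ * Matrix.SpecialLinearGroup.toGL (ρ.1.1 j) := by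
        intro j
        show Matrix.SpecialLinearGroup.toGL (c1 j * ρ.1.1 j) = _
        rw [map_mul, hc1]
        simp only []
        rw [toGL_slScale, mul_one, map_inv]
      have hρ''2 : ∀ j, Matrix.SpecialLinearGroup.toGL (ρ''.1.2 j)
          = (unitScalar (ε2 j))⁻¹ * Matrix.SpecialLinearGroup.toGL (ρ.1.2 j) := by
        intro j
        show Matrix.SpecialLinearGroup.toGL (c2 j * ρ.1.2 j) = _
        rw [map_mul, hc2]
        simp only []
        rw [toGL_slScale, mul_one, map_inv]
      have hεt1 : ∀ j, t'.1 j * (ε1 j)⁻¹ = t.1 j := by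
        intro j
        rw [hε1def]
        simp only []
        rw [mul_inv, inv_inv, ← mul_assoc, mul_inv_cancel, one_mul]
      have hεt2 : ∀ j, t'.2 j * (ε2 j)⁻¹ = t.2 j := by
        intro j
        rw [hε2def]
        simp only []
        rw [mul_inv, inv_inv, ← mul_assoc, mul_inv_cancel, one_mul]
      -- GL-level conjugacy of ρ'' and ρ'
      have hGL1 : ∀ j, Matrix.SpecialLinearGroup.toGL (ρ'.1.1 j)
          = h * Matrix.SpecialLinearGroup.toGL (ρ''.1.1 j) * h⁻¹ := by
        intro j
        apply mul_left_cancel (a := unitScalar (t'.1 j))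
        calc unitScalar (t'.1 j) * Matrix.SpecialLinearGroup.toGL (ρ'.1.1 j)
            = h * (unitScalar (t.1 j) * Matrix.SpecialLinearGroup.toGL (ρ.1.1 j)) * h⁻¹ := h1 j
          _ = unitScalar (t.1 j)
              * (h * Matrix.SpecialLinearGroup.toGL (ρ.1.1 j) * h⁻¹) := conj_scalar_left _ _ _
          _ = unitScalar (t'.1 j)
              * (h * Matrix.SpecialLinearGroup.toGL (ρ''.1.1 j) * h⁻¹) := by
              have e : unitScalar (t'.1 j) * (unitScalar ((ε1 j)⁻¹)
                  * (h * Matrix.SpecialLinearGroup.toGL (ρ.1.1 j) * h⁻¹))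
                  = unitScalar (t.1 j)
                    * (h * Matrix.SpecialLinearGroup.toGL (ρ.1.1 j) * h⁻¹) := by
                rw [← mul_assoc, ← map_mul, hεt1 j]
              rw [hρ''1 j, ← map_inv, conj_scalar_left, e]
      have hGL2 : ∀ j, Matrix.SpecialLinearGroup.toGL (ρ'.1.2 j)
          = h * Matrix.SpecialLinearGroup.toGL (ρ''.1.2 j) * h⁻¹ := by
        intro j
        apply mul_left_cancel (a := unitScalar (t'.2 j))
        calc unitScalar (t'.2 j) * Matrix.SpecialLinearGroup.toGL (ρ'.1.2 j)
            = h * (unitScalar (t.2 j) * Matrix.SpecialLinearGroup.toGL (ρ.1.2 j)) * h⁻¹ := h2 j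
          _ = unitScalar (t.2 j)
              * (h * Matrix.SpecialLinearGroup.toGL (ρ.1.2 j) * h⁻¹) := conj_scalar_left _ _ _
          _ = unitScalar (t'.2 j)
              * (h * Matrix.SpecialLinearGroup.toGL (ρ''.1.2 j) * h⁻¹) := by
              have e : unitScalar (t'.2 j) * (unitScalar ((ε2 j)⁻¹)
                  * (h * Matrix.SpecialLinearGroup.toGL (ρ.1.2 j) * h⁻¹))
                  = unitScalar (t.2 j)
                    * (h * Matrix.SpecialLinearGroup.toGL (ρ.1.2 j) * h⁻¹) := by
                rw [← mul_assoc, ← map_mul, hεt2 j]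
              rw [hρ''2 j, ← map_inv, conj_scalar_left, e]
      -- normalize h into SL
      obtain ⟨δ, hδ⟩ := exists_sqrt_unit (Matrix.GeneralLinearGroup.det h)
      set k : Matrix.SpecialLinearGroup (Fin 2) ℂ :=
        slScale δ⁻¹ h (sqrt_scale_cond _ _ hδ) with hk
      have htk : Matrix.SpecialLinearGroup.toGL k = unitScalar δ⁻¹ * h := by
        rw [hk, toGL_slScale]
      have conj1 : ∀ j, ρ'.1.1 j = k * ρ''.1.1 j * k⁻¹ := by
        intro j
        apply toGL_injective
        rw [map_mul, map_mul, map_inv, htk, conj_by_scalar_mul]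
        exact hGL1 j
      have conj2 : ∀ j, ρ'.1.2 j = k * ρ''.1.2 j * k⁻¹ := by
        intro j
        apply toGL_injective
        rw [map_mul, map_mul, map_inv, htk, conj_by_scalar_mul]
        exact hGL2 j
      refine ⟨(ε1, ε2), hε1, hε2, ?_, ?_, ρ'', hρ''1, hρ''2,
        quot_conj_eq.mpr ⟨k, conj1, conj2⟩⟩
      · funext j
        show t'.1 j = ε1 j * t.1 j
        rw [hε1def]
        simp only []
        rw [inv_mul_cancel_right]
      · funext j
        show t'.2 j = ε2 j * t.2 j
        rw [hε2def]
        simp only []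
        rw [inv_mul_cancel_right]
    · rintro ⟨ε, hε1, hε2, ht1, ht2, ρ'', hρ''1, hρ''2, hq'⟩
      have stepA : scalarCombo t ρ = scalarCombo t' ρ'' := by
        refine Prod.ext (funext fun j => ?_) (funext fun j => ?_)
        · show unitScalar (t.1 j) * Matrix.SpecialLinearGroup.toGL (ρ.1.1 j)
            = unitScalar (t'.1 j) * Matrix.SpecialLinearGroup.toGL (ρ''.1.1 j)
          rw [hρ''1 j, ht1]
          show _ = unitScalar (ε.1 j * t.1 j) * _
          rw [map_mul]
          calc unitScalar (t.1 j) * Matrix.SpecialLinearGroup.toGL (ρ.1.1 j)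
              = unitScalar (t.1 j) * unitScalar (ε.1 j) * ((unitScalar (ε.1 j))⁻¹
                * Matrix.SpecialLinearGroup.toGL (ρ.1.1 j)) := by group
            _ = unitScalar (ε.1 j) * unitScalar (t.1 j) * ((unitScalar (ε.1 j))⁻¹
                * Matrix.SpecialLinearGroup.toGL (ρ.1.1 j)) := by
                rw [(unitScalar_commute (t.1 j) (unitScalar (ε.1 j))).eq]
        · show unitScalar (t.2 j) * Matrix.SpecialLinearGroup.toGL (ρ.1.2 j)
            = unitScalar (t'.2 j) * Matrix.SpecialLinearGroup.toGL (ρ''.1.2 j)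
          rw [hρ''2 j, ht2]
          show _ = unitScalar (ε.2 j * t.2 j) * _
          rw [map_mul]
          calc unitScalar (t.2 j) * Matrix.SpecialLinearGroup.toGL (ρ.1.2 j)
              = unitScalar (t.2 j) * unitScalar (ε.2 j) * ((unitScalar (ε.2 j))⁻¹
                * Matrix.SpecialLinearGroup.toGL (ρ.1.2 j)) := by group
            _ = unitScalar (ε.2 j) * unitScalar (t.2 j) * ((unitScalar (ε.2 j))⁻¹
                * Matrix.SpecialLinearGroup.toGL (ρ.1.2 j)) := by
                rw [(unitScalar_commute (t.2 j) (unitScalar (ε.2 j))).eq]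
      obtain ⟨k, k1, k2⟩ := quot_conj_eq.mp hq'
      have stepB : conjRel g (scalarCombo t' ρ'') (scalarCombo t' ρ') := by
        refine ⟨Matrix.SpecialLinearGroup.toGL k, fun j => ?_, fun j => ?_⟩
        · show unitScalar (t'.1 j) * Matrix.SpecialLinearGroup.toGL (ρ'.1.1 j)
            = Matrix.SpecialLinearGroup.toGL k
              * (unitScalar (t'.1 j) * Matrix.SpecialLinearGroup.toGL (ρ''.1.1 j))
              * (Matrix.SpecialLinearGroup.toGL k)⁻¹
          rw [conj_scalar_left, k1 j, map_mul, map_mul, map_inv]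
        · show unitScalar (t'.2 j) * Matrix.SpecialLinearGroup.toGL (ρ'.1.2 j)
            = Matrix.SpecialLinearGroup.toGL k
              * (unitScalar (t'.2 j) * Matrix.SpecialLinearGroup.toGL (ρ''.1.2 j))
              * (Matrix.SpecialLinearGroup.toGL k)⁻¹
          rw [conj_scalar_left, k2 j, map_mul, map_mul, map_inv]
      rw [stepA]
      exact quot_conj_eq.mpr stepB
  · -- freeness
    intro t ε hε1 hε2 h1 h2
    have e1 : ε.1 = 1 := by
      have := h1
      calc ε.1 = ε.1 * t.1 * t.1⁻¹ := by group
        _ = t.1 * t.1⁻¹ := by rw [h1]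
        _ = 1 := by group
    have e2 : ε.2 = 1 := by
      calc ε.2 = ε.2 * t.2 * t.2⁻¹ := by group
        _ = t.2 * t.2⁻¹ := by rw [h2]
        _ = 1 := by group
    exact Prod.ext e1 e2
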